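/- Let d ≥ 1 and Δx > 0. There exists a constant C > 0, depending only on d, such that for every continuously differentiable compactly supported function f : ℝ^d → ℝ, the piecewise-constant cell average f̄ satisfies ∫_{ℝ^d} |f̄(x) − f(x)| dx ≤ C · Δx · ∫_{ℝ^d} ‖∇f(x)‖ dx. -/

import Mathlib

open MeasureTheory Set

/-- The spatial grid cell `R_α = αΔx + [-Δx/2, Δx/2)^d`. -/
def cell (d : ℕ) (dx : ℝ) (a : Fin d → ℤ) : Set (EuclideanSpace ℝ (Fin d)) :=
  {x | ∀ k : Fin d, (a k : ℝ) * dx - dx / 2 ≤ x k ∧ x k < (a k : ℝ) * dx + dx / 2}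


variable {d : ℕ}

lemma mem_own_cell (dx : ℝ) (hdx : 0 < dx) (x : EuclideanSpace ℝ (Fin d)) :
    x ∈ cell d dx (fun k => ⌊x k / dx + 1 / 2⌋) := by
  intro k
  have h1 := Int.floor_le (x k / dx + 1 / 2)
  have h2 := Int.lt_floor_add_one (x k / dx + 1 / 2)
  have h3 : x k / dx * dx = x k := div_mul_cancel₀ (x k) hdx.ne'
  constructor
  · nlinarith
  · nlinarith

lemma cell_eq_preimage (dx : ℝ) (a : Fin d → ℤ) :
    cell d dx a = ((MeasurableEquiv.toLp 2 (Fin d → ℝ)).symm) ⁻¹'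
      (Set.pi univ fun k => Ico ((a k : ℝ) * dx - dx / 2) ((a k : ℝ) * dx + dx / 2)) := by
  ext x
  simp [cell, Set.mem_pi, MeasurableEquiv.coe_toLp_symm]

lemma volume_cell (dx : ℝ) (a : Fin d → ℤ) :
    volume (cell d dx a) = ENNReal.ofReal dx ^ d := by
  rw [cell_eq_preimage,
    (EuclideanSpace.volume_preserving_symm_measurableEquiv_toLp (Fin d)).measure_preimage
      ((MeasurableSet.univ_pi fun k => measurableSet_Ico).nullMeasurableSet)]
  rw [volume_pi_pi]
  have : ∀ k : Fin d, volume (Ico ((a k : ℝ) * dx - dx / 2) ((a k : ℝ) * dx + dx / 2))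
      = ENNReal.ofReal dx := by
    intro k; rw [Real.volume_Ico]; ring_nf
  simp [this]

def Bset (d : ℕ) (dx : ℝ) : Set (EuclideanSpace ℝ (Fin d)) :=
  {h | ∀ k : Fin d, h k ∈ Ioo (-dx) dx}

lemma Bset_eq_preimage (dx : ℝ) :
    Bset d dx = ((MeasurableEquiv.toLp 2 (Fin d → ℝ)).symm) ⁻¹'
      (Set.pi univ fun _ => Ioo (-dx) dx) := by
  ext x
  simp [Bset, Set.mem_pi, MeasurableEquiv.coe_toLp_symm]

lemma volume_Bset (dx : ℝ) :
    volume (Bset d dx) = ENNReal.ofReal (2 * dx) ^ d := by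
  rw [Bset_eq_preimage,
    (EuclideanSpace.volume_preserving_symm_measurableEquiv_toLp (Fin d)).measure_preimage
      ((MeasurableSet.univ_pi fun _ => measurableSet_Ioo).nullMeasurableSet)]
  rw [volume_pi_pi]
  have : volume (Ioo (-dx) dx) = ENNReal.ofReal (2 * dx) := by
    rw [Real.volume_Ioo]; ring_nf
  simp [this]

lemma norm_le_of_mem_Bset {dx : ℝ} (hdx : 0 < dx) {h : EuclideanSpace ℝ (Fin d)}
    (hh : h ∈ Bset d dx) : ‖h‖ ≤ Real.sqrt d * dx := by
  rw [EuclideanSpace.norm_eq]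
  have : Real.sqrt d * dx = Real.sqrt (d * dx ^ 2) := by
    rw [Real.sqrt_mul (by positivity), Real.sqrt_sq hdx.le]
  rw [this]
  apply Real.sqrt_le_sqrt
  calc ∑ k, ‖h k‖ ^ 2 ≤ ∑ _k : Fin d, dx ^ 2 := by
        apply Finset.sum_le_sum
        intro k _
        have := hh k
        rw [Real.norm_eq_abs, ← sq_abs (dx)]
        apply pow_le_pow_left₀ (abs_nonneg _)
        rw [abs_of_pos hdx, abs_le]
        exact ⟨(this.1).le, (this.2).le⟩
    _ = d * dx ^ 2 := by simp [Finset.sum_const, mul_comm]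


/-- The piecewise-constant cell average `f̄(x) = Δx^{-d} ∫_{R_α} f(y) dy` for `x ∈ R_α`,
where `α` is the index of the cell containing `x`. -/
noncomputable def cellAvg (d : ℕ) (dx : ℝ) (f : EuclideanSpace ℝ (Fin d) → ℝ)
    (x : EuclideanSpace ℝ (Fin d)) : ℝ :=
  (1 / dx ^ d) * ∫ y in cell d dx (fun k => ⌊x k / dx + 1 / 2⌋), f y


lemma pointwise_bound (dx : ℝ) (hdx : 0 < dx) (f : EuclideanSpace ℝ (Fin d) → ℝ)
    (hf : ContDiff ℝ 1 f) (hsupp : HasCompactSupport f) (x : EuclideanSpace ℝ (Fin d)) :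
    (‖cellAvg d dx f x - f x‖₊ : ENNReal) ≤
      (ENNReal.ofReal dx ^ d)⁻¹ * ∫⁻ h in Bset d dx, ‖f (x + h) - f x‖₊ := by
  set a : Fin d → ℤ := fun k => ⌊x k / dx + 1 / 2⌋ with ha
  set R := cell d dx a with hR
  have hxR : x ∈ R := mem_own_cell dx hdx x
  have hvol : volume R = ENNReal.ofReal dx ^ d := volume_cell dx a
  have hvfin : volume R ≠ ⊤ := by
    rw [hvol]; exact ENNReal.pow_ne_top ENNReal.ofReal_ne_top
  have hfint : IntegrableOn f R :=
    (hf.continuous.integrable_of_hasCompactSupport hsupp).integrableOn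
  have hdxd : (0:ℝ) < dx ^ d := by positivity
  have heq : cellAvg d dx f x - f x = (1 / dx ^ d) * ∫ y in R, (f y - f x) := by
    rw [integral_sub hfint (integrableOn_const hvfin),
      setIntegral_const]
    have htr : volume.real R = dx ^ d := by
      rw [measureReal_def, hvol, ← ENNReal.ofReal_pow hdx.le, ENNReal.toReal_ofReal hdxd.le]
    rw [htr, smul_eq_mul, mul_sub, cellAvg]
    rw [← hR]
    field_simp
  rw [heq]
  have hnn : (‖(1 / dx ^ d) * ∫ y in R, (f y - f x)‖₊ : ENNReal)
      = ENNReal.ofReal (1 / dx ^ d) * ‖∫ y in R, (f y - f x)‖₊ := by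
    rw [nnnorm_mul, ENNReal.coe_mul]
    congr 1
    rw [← enorm_eq_nnnorm, Real.enorm_eq_ofReal (by positivity)]
  rw [hnn]
  have hc : ENNReal.ofReal (1 / dx ^ d) = (ENNReal.ofReal dx ^ d)⁻¹ := by
    rw [one_div, ← ENNReal.ofReal_pow hdx.le, ENNReal.ofReal_inv_of_pos hdxd]
  rw [hc]
  apply mul_le_mul_right
  refine (enorm_integral_le_lintegral_enorm _).trans ?_
  have himg : ∫⁻ h in Bset d dx, (‖f (x + h) - f x‖₊ : ENNReal)
      = ∫⁻ y in (fun h => x + h) '' Bset d dx, ‖f y - f x‖₊ := by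
    simpa using (measurePreserving_add_left volume x).setLIntegral_comp_emb
      (MeasurableEquiv.addLeft x).measurableEmbedding
      (fun y => (‖f y - f x‖₊ : ENNReal)) (Bset d dx)
  rw [himg]
  apply lintegral_mono_set
  intro y hy
  refine ⟨y - x, ?_, by module⟩
  intro k
  have h1 := (hxR k)
  have h2 := (hy k)
  have : (y - x) k = y k - x k := rfl
  rw [this]
  constructor
  · linarith [h1.2, h2.1]
  · linarith [h1.1, h2.2]

lemma trans_est (f : EuclideanSpace ℝ (Fin d) → ℝ) (hf : ContDiff ℝ 1 f)
    (h : EuclideanSpace ℝ (Fin d)) :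
    ∫⁻ x, ‖f (x + h) - f x‖₊ ≤ ‖h‖₊ * ∫⁻ x, ‖fderiv ℝ f x‖₊ := by
  have hdf : Continuous (fderiv ℝ f) := hf.continuous_fderiv one_ne_zero
  have key : ∀ x : EuclideanSpace ℝ (Fin d), f (x + h) - f x
      = ∫ t in (0:ℝ)..1, (fderiv ℝ f (x + t • h)) h := by
    intro x
    have hpath : ∀ t : ℝ, HasDerivAt (fun t : ℝ => x + t • h) h t := by
      intro t
      simpa using (((hasDerivAt_id t).smul_const h).const_add x)
    have hder : ∀ t : ℝ, HasDerivAt (fun t : ℝ => f (x + t • h))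
        ((fderiv ℝ f (x + t • h)) h) t := by
      intro t
      exact ((hf.differentiable one_ne_zero (x + t • h)).hasFDerivAt).comp_hasDerivAt t (hpath t)
    have hint : IntervalIntegrable (fun t : ℝ => (fderiv ℝ f (x + t • h)) h)
        volume 0 1 := by
      apply Continuous.intervalIntegrable
      exact (hdf.comp (by continuity)).clm_apply continuous_const
    have := intervalIntegral.integral_eq_sub_of_hasDerivAt
      (fun t _ => hder t) hint
    simp only [one_smul, zero_smul, add_zero] at this
    rw [this]
  calc ∫⁻ x, (‖f (x + h) - f x‖₊ : ENNReal)
      ≤ ∫⁻ x, ∫⁻ t in Ioc (0:ℝ) 1, ‖fderiv ℝ f (x + t • h)‖₊ * ‖h‖₊ := by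
        apply lintegral_mono
        intro x
        dsimp only
        rw [key x, intervalIntegral.integral_of_le zero_le_one]
        refine (enorm_integral_le_lintegral_enorm _).trans ?_
        apply lintegral_mono
        intro t
        dsimp only
        exact_mod_cast (fderiv ℝ f (x + t • h)).le_opNNNorm h
    _ = ∫⁻ t in Ioc (0:ℝ) 1, ∫⁻ x, ‖fderiv ℝ f (x + t • h)‖₊ * ‖h‖₊ := by
        apply lintegral_lintegral_swap
        apply Measurable.aemeasurable
        apply Measurable.mul_const
        apply Measurable.coe_nnreal_ennreal
        apply Measurable.nnnorm
        exact (hdf.comp ((continuous_fst).add ((continuous_snd).smul continuous_const))).measurable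
    _ = ∫⁻ t in Ioc (0:ℝ) 1, (∫⁻ x, (‖fderiv ℝ f x‖₊ : ENNReal)) * ‖h‖₊ := by
        apply setLIntegral_congr_fun measurableSet_Ioc
        intro t _
        dsimp only
        rw [lintegral_mul_const' _ _ ENNReal.coe_ne_top,
          lintegral_add_right_eq_self (fun x => (‖fderiv ℝ f x‖₊ : ENNReal)) (t • h)]
    _ ≤ ‖h‖₊ * ∫⁻ x, ‖fderiv ℝ f x‖₊ := by
        rw [setLIntegral_const, Real.volume_Ioc]
        simp [mul_comm]


theorem stmt13 (d : ℕ) (hd : 1 ≤ d) :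
    ∃ C > 0, ∀ dx : ℝ, 0 < dx →
      ∀ f : EuclideanSpace ℝ (Fin d) → ℝ, ContDiff ℝ 1 f → HasCompactSupport f →
        (∫ x, |cellAvg d dx f x - f x|) ≤ C * dx * ∫ x, ‖fderiv ℝ f x‖ := by
  have hd0 : (0:ℝ) < d := by exact_mod_cast hd
  refine ⟨Real.sqrt d * 2 ^ d,
    mul_pos (Real.sqrt_pos.mpr hd0) (by positivity), ?_⟩
  set C : ℝ := Real.sqrt d * 2 ^ d with hCdef
  have hC : 0 < C := mul_pos (Real.sqrt_pos.mpr hd0) (by positivity)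
  intro dx hdx f hf hsupp
  have hdf : Continuous (fderiv ℝ f) := hf.continuous_fderiv one_ne_zero
  have hDf : Integrable (fderiv ℝ f) :=
    hdf.integrable_of_hasCompactSupport (hsupp.fderiv ℝ)
  set L := ∫⁻ x, (‖fderiv ℝ f x‖₊ : ENNReal) with hL
  have hLfin : L ≠ ⊤ := hDf.2.ne
  have hRHS : ∫ x, ‖fderiv ℝ f x‖ = L.toReal := by
    rw [integral_eq_lintegral_of_nonneg_ae
      (Filter.Eventually.of_forall fun x => norm_nonneg _) hdf.norm.aestronglyMeasurable]
    congr 1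
    apply lintegral_congr
    intro x
    rw [ofReal_norm, enorm_eq_nnnorm]
  have hmeas : Measurable (cellAvg d dx f) := by
    have h1 : Measurable fun x : EuclideanSpace ℝ (Fin d) =>
        (fun k => ⌊x k / dx + 1 / 2⌋ : Fin d → ℤ) := by
      apply measurable_pi_lambda
      intro k
      have hxk : Measurable fun x : EuclideanSpace ℝ (Fin d) => x k := (measurable_pi_apply k).comp (MeasurableEquiv.toLp 2 (Fin d → ℝ)).symm.measurable
      exact ((hxk.div_const dx).add_const (1/2)).floor
    exact measurable_const.mul
      ((measurable_of_countable (fun a : Fin d → ℤ => ∫ y in cell d dx a, f y)).comp h1)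
  have hmeas2 : Measurable fun x => |cellAvg d dx f x - f x| :=
    (hmeas.sub hf.continuous.measurable).abs
  set T := ∫⁻ x, (‖cellAvg d dx f x - f x‖₊ : ENNReal) with hT
  have hLHS : (∫ x, |cellAvg d dx f x - f x|) = T.toReal := by
    rw [integral_eq_lintegral_of_nonneg_ae
      (Filter.Eventually.of_forall fun x => abs_nonneg _) hmeas2.aestronglyMeasurable]
    congr 1
    apply lintegral_congr
    intro x
    rw [← Real.enorm_eq_ofReal_abs, enorm_eq_nnnorm]
  set V := ENNReal.ofReal dx ^ d with hV
  have hV0 : V ≠ 0 := by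
    apply pow_ne_zero
    simp only [ne_eq, ENNReal.ofReal_eq_zero, not_le]
    exact hdx
  have hVtop : V ≠ ⊤ := ENNReal.pow_ne_top ENNReal.ofReal_ne_top
  set A := ENNReal.ofReal (Real.sqrt d * dx) with hA
  have key : T ≤ ENNReal.ofReal (C * dx) * L := by
    calc T ≤ ∫⁻ x, V⁻¹ * ∫⁻ h in Bset d dx, ‖f (x + h) - f x‖₊ :=
          lintegral_mono fun x => pointwise_bound dx hdx f hf hsupp x
      _ = V⁻¹ * ∫⁻ x, ∫⁻ h in Bset d dx, ‖f (x + h) - f x‖₊ :=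
          lintegral_const_mul' _ _ (ENNReal.inv_ne_top.2 hV0)
      _ = V⁻¹ * ∫⁻ h in Bset d dx, ∫⁻ x, ‖f (x + h) - f x‖₊ := by
          congr 1
          apply lintegral_lintegral_swap
          apply Measurable.aemeasurable
          apply Measurable.coe_nnreal_ennreal
          apply Measurable.nnnorm
          exact ((hf.continuous.comp (continuous_fst.add continuous_snd)).sub
            (hf.continuous.comp continuous_fst)).measurable
      _ ≤ V⁻¹ * ∫⁻ h in Bset d dx, (‖h‖₊ : ENNReal) * L := by
          apply mul_le_mul_right
          exact lintegral_mono fun h => trans_est f hf h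
      _ ≤ V⁻¹ * ∫⁻ h in Bset d dx, A * L := by
          apply mul_le_mul_right
          apply setLIntegral_mono measurable_const
          intro h hh
          apply mul_le_mul_left
          calc (‖h‖₊ : ENNReal) = ENNReal.ofReal ‖h‖ := (ofReal_norm h).symm
            _ ≤ A := ENNReal.ofReal_le_ofReal (norm_le_of_mem_Bset hdx hh)
      _ = V⁻¹ * (A * L * (2 ^ d * V)) := by
          rw [setLIntegral_const, volume_Bset]
          congr 1
          congr 1
          rw [ENNReal.ofReal_mul (by norm_num : (0:ℝ) ≤ 2), mul_pow, ENNReal.ofReal_ofNat, hV]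
      _ = (V⁻¹ * V) * (2 ^ d * (A * L)) := by ring
      _ = 2 ^ d * (A * L) := by rw [ENNReal.inv_mul_cancel hV0 hVtop, one_mul]
      _ = ENNReal.ofReal (C * dx) * L := by
          rw [show C * dx = 2 ^ d * (Real.sqrt d * dx) by rw [hCdef]; ring,
            ENNReal.ofReal_mul (by positivity), ← hA,
            show ENNReal.ofReal ((2:ℝ) ^ d) = 2 ^ d by
              rw [ENNReal.ofReal_pow (by norm_num : (0:ℝ) ≤ 2), ENNReal.ofReal_ofNat]]
          ring
  rw [hLHS, hRHS]
  calc T.toReal ≤ (ENNReal.ofReal (C * dx) * L).toReal :=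
        ENNReal.toReal_mono (ENNReal.mul_ne_top ENNReal.ofReal_ne_top hLfin) key
    _ = (C * dx) * L.toReal := by
        rw [ENNReal.toReal_mul, ENNReal.toReal_ofReal (by positivity)]
    _ = C * dx * L.toReal := by ring
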